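/- arXiv:1709.05174 — 2 statements merged into one kernel-verified Lean document; each statement's English description precedes it below -/
import Mathlib

section
/- Let F, X, Y be finite sets and let p be a pmf on F×X×Y of the form p(f,x,y) = p(f,x)·W(y|x) for some channel W from X to Y (so F → X → Y is a Markov chain). For each f with p_F(f) > 0 let p^f be the conditional pmf on X×Y given F = f. Then max{ J_∞(p^f) : f with p_F(f) > 0 } ≤ J_∞(p_{XY}), where p_{XY} is the (X,Y)-marginal of p. -/
/-- A probability mass function on a finite set `S`. -/
def IsPMF {S : Type*} [Fintype S] (p : S → ℝ) : Prop :=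
  (∀ s, 0 ≤ p s) ∧ ∑ s, p s = 1

open Classical in
/-- Rényi divergence of order `α ∈ (0,1) ∪ (1,∞]` between finitely supported
distributions, with values in `(-∞,∞]`:
`D_α(p‖q) = (α−1)⁻¹ · log Σ_{s : p(s)>0} p(s)^α q(s)^{1−α}` for finite `α`, equal to
`+∞` if `α > 1` and `supp p ⊄ supp q`, and
`D_∞(p‖q) = log max_{s : p(s)>0} p(s)/q(s)`, equal to `+∞` if `supp p ⊄ supp q`. -/
noncomputable def renyiD {S : Type*} [Fintype S] (α : ENNReal) (p q : S → ℝ) : EReal :=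
  if α = ⊤ then
    (if ∀ s, 0 < p s → 0 < q s then
      ((Real.log (sSup { r : ℝ | ∃ s, 0 < p s ∧ r = p s / q s }) : ℝ) : EReal)
    else ⊤)
  else if 1 < α ∧ ¬ ∀ s, 0 < p s → 0 < q s then ⊤
  else (((α.toReal - 1)⁻¹ *
      Real.log (∑ s ∈ Finset.univ.filter (fun s => 0 < p s),
        p s ^ α.toReal * q s ^ (1 - α.toReal)) : ℝ) : EReal)

/-- The correlation measure `J_α(p) = D_α(q‖r)` where
`q((x₁,y₁),(x₂,y₂)) = p(x₁,y₁)·p(x₂,y₂)` and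
`r((x₁,y₁),(x₂,y₂)) = p(x₁,y₂)·p(x₂,y₁)`. -/
noncomputable def Jalpha {X Y : Type*} [Fintype X] [Fintype Y] (α : ENNReal)
    (p : X × Y → ℝ) : EReal :=
  renyiD α (fun t : (X × Y) × (X × Y) => p t.1 * p t.2)
    (fun t : (X × Y) × (X × Y) => p (t.1.1, t.2.2) * p (t.2.1, t.1.2))

lemma renyiD_top_pos {S : Type*} [Fintype S] (p q : S → ℝ)
    (h : ∀ s, 0 < p s → 0 < q s) :
    renyiD ⊤ p q =
      ((Real.log (sSup { r : ℝ | ∃ s, 0 < p s ∧ r = p s / q s }) : ℝ) : EReal) := by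
  rw [renyiD, if_pos rfl, if_pos h]

lemma renyiD_top_neg {S : Type*} [Fintype S] (p q : S → ℝ)
    (h : ¬ ∀ s, 0 < p s → 0 < q s) : renyiD ⊤ p q = ⊤ := by
  rw [renyiD, if_pos rfl, if_neg h]

/-- if `F → X → Y` is a Markov chain (the joint pmf has the form
`p(f,x,y) = p(f,x)·W(y|x)` for a channel `W`), then
`max{J_∞(p^f) : p_F(f) > 0} ≤ J_∞(p_XY)`, where `p^f` is the conditional pmf of
`(X,Y)` given `F = f` and `p_XY` is the `(X,Y)`-marginal. -/
theorem Jinfty_cond_le {F X Y : Type*} [Fintype F] [Fintype X] [Fintype Y]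
    (p : F × X × Y → ℝ) (hp : IsPMF p)
    (W : X → Y → ℝ) (hW : ∀ x, IsPMF (W x))
    (hform : ∀ f x y, p (f, x, y) = (∑ y', p (f, x, y')) * W x y) :
    sSup { J : EReal | ∃ f, 0 < (∑ x, ∑ y, p (f, x, y)) ∧
        J = Jalpha ⊤ (fun xy : X × Y =>
          p (f, xy.1, xy.2) / (∑ x, ∑ y, p (f, x, y))) }
      ≤ Jalpha ⊤ (fun xy : X × Y => ∑ f, p (f, xy.1, xy.2)) := by
  classical
  obtain ⟨hp0, hp1⟩ := hp
  set a : F → X → ℝ := fun f x => ∑ y', p (f, x, y') with ha_def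
  have ha0 : ∀ f x, 0 ≤ a f x := fun f x => Finset.sum_nonneg fun y _ => hp0 _
  set b : X → ℝ := fun x => ∑ f, a f x with hb_def
  have hb0 : ∀ x, 0 ≤ b x := fun x => Finset.sum_nonneg fun f _ => ha0 f x
  have hab : ∀ f x, a f x ≤ b x := fun f x =>
    Finset.single_le_sum (fun g _ => ha0 g x) (Finset.mem_univ f)
  have hW0 : ∀ x y, 0 ≤ W x y := fun x y => (hW x).1 y
  set m : X × Y → ℝ := fun xy => ∑ f, p (f, xy.1, xy.2) with hm_def
  have hm : ∀ x y, m (x, y) = b x * W x y := by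
    intro x y
    simp only [hm_def, hb_def]
    rw [Finset.sum_mul]
    exact Finset.sum_congr rfl fun f _ => hform f x y
  have hppos : ∀ f x y, 0 < p (f, x, y) ↔ 0 < a f x ∧ 0 < W x y := by
    intro f x y
    rw [hform f x y]
    constructor
    · intro h
      rcases mul_pos_iff.mp h with ⟨h1, h2⟩ | ⟨h1, h2⟩
      · exact ⟨h1, h2⟩
      · exact absurd h1 (not_lt.mpr (ha0 f x))
    · exact fun ⟨h1, h2⟩ => mul_pos h1 h2
  have hmpos : ∀ x y, 0 < m (x, y) ↔ 0 < b x ∧ 0 < W x y := by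
    intro x y
    rw [hm x y]
    constructor
    · intro h
      rcases mul_pos_iff.mp h with ⟨h1, h2⟩ | ⟨h1, h2⟩
      · exact ⟨h1, h2⟩
      · exact absurd h1 (not_lt.mpr (hb0 x))
    · exact fun ⟨h1, h2⟩ => mul_pos h1 h2
  -- the marginal side
  by_cases hM : ∀ s : (X × Y) × (X × Y), 0 < m s.1 * m s.2 →
      0 < m (s.1.1, s.2.2) * m (s.2.1, s.1.2)
  swap
  · rw [show Jalpha ⊤ m = ⊤ from renyiD_top_neg _ _ hM]
    exact le_top
  rw [show Jalpha ⊤ m = _ from renyiD_top_pos _ _ hM]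
  apply sSup_le
  rintro J ⟨f, hcf, rfl⟩
  set c : ℝ := ∑ x, ∑ y, p (f, x, y) with hc_def
  set pc : X × Y → ℝ := fun xy => p (f, xy.1, xy.2) / c with hpc_def
  have hpcpos : ∀ x y, 0 < pc (x, y) ↔ 0 < p (f, x, y) := by
    intro x y
    simp only [hpc_def]
    constructor
    · intro h
      by_contra hn
      push_neg at hn
      have : p (f, x, y) / c ≤ 0 := div_nonpos_of_nonpos_of_nonneg hn hcf.le
      linarith
    · intro h; exact div_pos h hcf
  -- master key lemma
  have key : ∀ x1 y1 x2 y2, 0 < pc (x1, y1) * pc (x2, y2) →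
      (0 < m (x1, y1) * m (x2, y2)) ∧ (0 < pc (x1, y2) * pc (x2, y1)) ∧
      (pc (x1, y1) * pc (x2, y2)) / (pc (x1, y2) * pc (x2, y1)) =
        (m (x1, y1) * m (x2, y2)) / (m (x1, y2) * m (x2, y1)) := by
    intro x1 y1 x2 y2 h
    have h1 : 0 < pc (x1, y1) ∧ 0 < pc (x2, y2) := by
      rcases mul_pos_iff.mp h with ⟨u, v⟩ | ⟨u, v⟩
      · exact ⟨u, v⟩
      · exfalso
        have : 0 ≤ pc (x1, y1) := div_nonneg (hp0 _) hcf.le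
        linarith
    obtain ⟨ha1, hW11⟩ := (hppos f x1 y1).mp ((hpcpos x1 y1).mp h1.1)
    obtain ⟨ha2, hW22⟩ := (hppos f x2 y2).mp ((hpcpos x2 y2).mp h1.2)
    have hb1 : 0 < b x1 := lt_of_lt_of_le ha1 (hab f x1)
    have hb2 : 0 < b x2 := lt_of_lt_of_le ha2 (hab f x2)
    have hqm : 0 < m (x1, y1) * m (x2, y2) :=
      mul_pos ((hmpos x1 y1).mpr ⟨hb1, hW11⟩) ((hmpos x2 y2).mpr ⟨hb2, hW22⟩)
    have hrm : 0 < m (x1, y2) * m (x2, y1) := hM ((x1, y1), (x2, y2)) hqm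
    have hrm1 : 0 < m (x1, y2) ∧ 0 < m (x2, y1) := by
      rcases mul_pos_iff.mp hrm with ⟨u, v⟩ | ⟨u, v⟩
      · exact ⟨u, v⟩
      · exfalso
        have : 0 ≤ m (x1, y2) := Finset.sum_nonneg fun g _ => hp0 _
        linarith
    have hW12 : 0 < W x1 y2 := ((hmpos x1 y2).mp hrm1.1).2
    have hW21 : 0 < W x2 y1 := ((hmpos x2 y1).mp hrm1.2).2
    refine ⟨hqm, mul_pos ((hpcpos x1 y2).mpr ((hppos f x1 y2).mpr ⟨ha1, hW12⟩))
      ((hpcpos x2 y1).mpr ((hppos f x2 y1).mpr ⟨ha2, hW21⟩)), ?_⟩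
    have e1 : ∀ x y, pc (x, y) = a f x * W x y / c := by
      intro x y; simp only [hpc_def]; rw [hform f x y]
    rw [e1, e1, e1, e1, hm, hm, hm, hm]
    field_simp
  have hFsupp : ∀ s : (X × Y) × (X × Y), 0 < pc s.1 * pc s.2 →
      0 < pc (s.1.1, s.2.2) * pc (s.2.1, s.1.2) := by
    rintro ⟨⟨x1, y1⟩, x2, y2⟩ h
    exact (key x1 y1 x2 y2 h).2.1
  rw [show Jalpha ⊤ pc = _ from renyiD_top_pos _ _ hFsupp]
  -- the two real sets
  set Sf : Set ℝ := { r : ℝ | ∃ s : (X × Y) × (X × Y),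
      0 < pc s.1 * pc s.2 ∧ r = (pc s.1 * pc s.2) / (pc (s.1.1, s.2.2) * pc (s.2.1, s.1.2)) }
    with hSf_def
  set Sm : Set ℝ := { r : ℝ | ∃ s : (X × Y) × (X × Y),
      0 < m s.1 * m s.2 ∧ r = (m s.1 * m s.2) / (m (s.1.1, s.2.2) * m (s.2.1, s.1.2)) }
    with hSm_def
  have hSmfin : Sm.Finite := Set.Finite.subset
    (Set.finite_range (fun s : (X × Y) × (X × Y) =>
      (m s.1 * m s.2) / (m (s.1.1, s.2.2) * m (s.2.1, s.1.2))))
    (by rintro r ⟨s, _, rfl⟩; exact ⟨s, rfl⟩)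
  have hSffin : Sf.Finite := Set.Finite.subset
    (Set.finite_range (fun s : (X × Y) × (X × Y) =>
      (pc s.1 * pc s.2) / (pc (s.1.1, s.2.2) * pc (s.2.1, s.1.2))))
    (by rintro r ⟨s, _, rfl⟩; exact ⟨s, rfl⟩)
  have hsub : Sf ⊆ Sm := by
    rintro r ⟨⟨⟨x1, y1⟩, x2, y2⟩, hs, rfl⟩
    obtain ⟨hqm, _, heq⟩ := key x1 y1 x2 y2 hs
    exact ⟨((x1, y1), (x2, y2)), hqm, heq⟩
  -- Sf is nonempty with a positive element
  have hex : ∃ x y, 0 < p (f, x, y) := by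
    by_contra h
    push_neg at h
    have : c ≤ 0 := Finset.sum_nonpos fun x _ => Finset.sum_nonpos fun y _ => h x y
    linarith
  obtain ⟨x0, y0, hx0⟩ := hex
  have hs0 : 0 < pc (x0, y0) * pc (x0, y0) :=
    mul_pos ((hpcpos x0 y0).mpr hx0) ((hpcpos x0 y0).mpr hx0)
  set e0 : ℝ := (pc (x0, y0) * pc (x0, y0)) / (pc (x0, y0) * pc (x0, y0)) with he0
  have he0mem : e0 ∈ Sf := ⟨((x0, y0), (x0, y0)), hs0, rfl⟩
  have he0pos : 0 < e0 := div_pos hs0 (hFsupp ((x0, y0), (x0, y0)) hs0)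
  have hpos : 0 < sSup Sf := lt_of_lt_of_le he0pos (le_csSup hSffin.bddAbove he0mem)
  have hle : sSup Sf ≤ sSup Sm := csSup_le_csSup hSmfin.bddAbove ⟨e0, he0mem⟩ hsub
  exact EReal.coe_le_coe_iff.mpr (Real.log_le_log hpos hle)
end

section
/- Let X, Y be finite sets and W a channel from X to Y with W(y|x) > 0 for all x, y, and define J_∞(W) = log max{ W(y₁|x₁)·W(y₂|x₂) / ( W(y₁|x₂)·W(y₂|x₁) ) : x₁,x₂ ∈ X, y₁,y₂ ∈ Y }. Let n ≥ 1, let M, M̂ be finite sets with M = M̂, let P_M be a pmf on M, let E be a channel from M to Xⁿ (encoder), and let D be a channel from Yⁿ to M̂ (decoder). Define the end-to-end channel p(m̂|m) = Σ_{xⁿ, yⁿ} E(xⁿ|m)·(Π_{i=1}^n W(y_i|x_i))·D(m̂|yⁿ). Then for all m₁ ≠ m₂ in M with P_M(m₁) > 0 and P_M(m₂) > 0, p(m₂|m₁)·p(m₁|m₂) ≥ exp(−n·J_∞(W))·p(m₁|m₁)·p(m₂|m₂). -/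
/-- `J_∞` of a channel `W` from `X` to `Y`:
`log max{W(y₁|x₁)W(y₂|x₂)/(W(y₁|x₂)W(y₂|x₁))}`. -/
noncomputable def JinftyChannel {X Y : Type*} [Fintype X] [Fintype Y]
    (W : X → Y → ℝ) : ℝ :=
  Real.log (sSup { r : ℝ | ∃ x₁ x₂ y₁ y₂,
    r = W x₁ y₁ * W x₂ y₂ / (W x₂ y₁ * W x₁ y₂) })

/-- The end-to-end channel `p(m̂|m)` of an encoder `E`, `n` memoryless uses of the
channel `W`, and a decoder `D`. -/
noncomputable def endToEnd {X Y M : Type*} [Fintype X] [Fintype Y] [Fintype M]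
    (W : X → Y → ℝ) (n : ℕ) (E : M → (Fin n → X) → ℝ)
    (D : (Fin n → Y) → M → ℝ) : M → M → ℝ :=
  fun m mh => ∑ xs : Fin n → X, ∑ ys : Fin n → Y,
    E m xs * (∏ i, W (xs i) (ys i)) * D ys mh

private lemma rearr_sum {α β : Type*} [Fintype α] [Fintype β] (a b : α → β → ℝ) :
    (∑ x, ∑ y, a x y) * (∑ x, ∑ y, b x y)
      = ∑ x, ∑ x', ∑ y, ∑ y', a x y * b x' y' := by
  rw [Fintype.sum_mul_sum]
  exact Finset.sum_congr rfl fun x _ => Finset.sum_congr rfl fun x' _ =>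
    Fintype.sum_mul_sum _ _

/-- an "uncertainty principle" for channel coding: for any strictly
positive channel `W`, message pmf `P_M`, encoder, and decoder, and any two messages
`m₁ ≠ m₂` of positive probability,
`p(m₂|m₁)·p(m₁|m₂) ≥ exp(−n·J_∞(W))·p(m₁|m₁)·p(m₂|m₂)`. -/
theorem channel_coding_uncertainty {X Y M : Type*} [Fintype X] [Fintype Y] [Fintype M]
    (W : X → Y → ℝ) (hW : ∀ x, IsPMF (W x)) (hWpos : ∀ x y, 0 < W x y)
    (n : ℕ) (hn : 1 ≤ n)
    (PM : M → ℝ) (hPM : IsPMF PM)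
    (E : M → (Fin n → X) → ℝ) (hE : ∀ m, IsPMF (E m))
    (D : (Fin n → Y) → M → ℝ) (hD : ∀ ys, IsPMF (D ys))
    (m₁ m₂ : M) (hne : m₁ ≠ m₂) (h₁ : 0 < PM m₁) (h₂ : 0 < PM m₂) :
    endToEnd W n E D m₁ m₂ * endToEnd W n E D m₂ m₁
      ≥ Real.exp (-(n : ℝ) * JinftyChannel W)
          * (endToEnd W n E D m₁ m₁ * endToEnd W n E D m₂ m₂) := by
  classical
  -- nonemptiness
  haveI hFn : Nonempty (Fin n) := ⟨⟨0, hn⟩⟩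
  haveI hXne : Nonempty X := by
    by_contra h
    haveI : IsEmpty X := not_nonempty_iff.mp h
    haveI : IsEmpty (Fin n → X) := ⟨fun f => (this.false (f (Classical.arbitrary (Fin n))))⟩
    have h1 := (hE m₁).2
    rw [Finset.univ_eq_empty, Finset.sum_empty] at h1
    exact one_ne_zero h1.symm
  haveI hYne : Nonempty Y := by
    by_contra h
    haveI : IsEmpty Y := not_nonempty_iff.mp h
    have h1 := (hW (Classical.arbitrary X)).2
    rw [Finset.univ_eq_empty, Finset.sum_empty] at h1
    exact one_ne_zero h1.symm
  obtain ⟨x0⟩ := hXne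
  obtain ⟨y0⟩ := hYne
  -- the set and its sup
  set S : Set ℝ := { r : ℝ | ∃ x₁ x₂ y₁ y₂,
    r = W x₁ y₁ * W x₂ y₂ / (W x₂ y₁ * W x₁ y₂) } with hS
  set c : ℝ := sSup S with hc
  have hJ : JinftyChannel W = Real.log c := rfl
  have hmem : ∀ x₁ x₂ y₁ y₂,
      (W x₁ y₁ * W x₂ y₂ / (W x₂ y₁ * W x₁ y₂)) ∈ S :=
    fun x₁ x₂ y₁ y₂ => ⟨x₁, x₂, y₁, y₂, rfl⟩
  have hSrange : S = Set.range (fun q : X × X × Y × Y =>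
      W q.1 q.2.2.1 * W q.2.1 q.2.2.2 / (W q.2.1 q.2.2.1 * W q.1 q.2.2.2)) := by
    ext r
    constructor
    · rintro ⟨x₁, x₂, y₁, y₂, rfl⟩; exact ⟨(x₁, x₂, y₁, y₂), rfl⟩
    · rintro ⟨⟨x₁, x₂, y₁, y₂⟩, rfl⟩; exact ⟨x₁, x₂, y₁, y₂, rfl⟩
  have hbdd : BddAbove S := by
    rw [hSrange]; exact (Set.finite_range _).bddAbove
  have hcpos : 0 < c := by
    have h1 : (0:ℝ) < W x0 y0 * W x0 y0 / (W x0 y0 * W x0 y0) :=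
      div_pos (mul_pos (hWpos x0 y0) (hWpos x0 y0)) (mul_pos (hWpos x0 y0) (hWpos x0 y0))
    exact lt_of_lt_of_le h1 (le_csSup hbdd (hmem x0 x0 y0 y0))
  have key : ∀ x₁ x₂ y₁ y₂, W x₁ y₁ * W x₂ y₂ ≤ c * (W x₂ y₁ * W x₁ y₂) := by
    intro x₁ x₂ y₁ y₂
    have hle := le_csSup hbdd (hmem x₁ x₂ y₁ y₂)
    have hpos : 0 < W x₂ y₁ * W x₁ y₂ := mul_pos (hWpos _ _) (hWpos _ _)
    calc W x₁ y₁ * W x₂ y₂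
        = (W x₁ y₁ * W x₂ y₂ / (W x₂ y₁ * W x₁ y₂)) * (W x₂ y₁ * W x₁ y₂) := by
          rw [div_mul_cancel₀ _ hpos.ne']
      _ ≤ c * (W x₂ y₁ * W x₁ y₂) := by
          exact mul_le_mul_of_nonneg_right hle hpos.le
  -- exp term
  have hexp : Real.exp (-(n : ℝ) * JinftyChannel W) = (c ^ n)⁻¹ := by
    rw [hJ, neg_mul, Real.exp_neg, Real.exp_nat_mul, Real.exp_log hcpos]
  -- notation
  set P : (Fin n → X) → (Fin n → Y) → ℝ := fun xs ys => ∏ i, W (xs i) (ys i) with hPdef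
  have hPpos : ∀ xs ys, 0 < P xs ys := fun xs ys =>
    Finset.prod_pos fun i _ => hWpos _ _
  have hcn : (0:ℝ) < c ^ n := pow_pos hcpos n
  -- pointwise product inequality
  have hQ : ∀ (xs xs' : Fin n → X) (ys ys' : Fin n → Y),
      (c ^ n)⁻¹ * (P xs ys' * P xs' ys) ≤ P xs ys * P xs' ys' := by
    intro xs xs' ys ys'
    have hprod : P xs ys' * P xs' ys ≤ c ^ n * (P xs ys * P xs' ys') := by
      have h1 : P xs ys' * P xs' ys = ∏ i, (W (xs i) (ys' i) * W (xs' i) (ys i)) := by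
        rw [hPdef]; rw [Finset.prod_mul_distrib]
      have h2 : (∏ i, (c * (W (xs i) (ys i) * W (xs' i) (ys' i))))
          = c ^ n * (P xs ys * P xs' ys') := by
        rw [Finset.prod_mul_distrib, Finset.prod_const, Finset.card_univ,
          Fintype.card_fin, Finset.prod_mul_distrib]
      rw [h1, ← h2]
      apply Finset.prod_le_prod
      · intro i _; exact (mul_pos (hWpos _ _) (hWpos _ _)).le
      · intro i _
        calc W (xs i) (ys' i) * W (xs' i) (ys i)
            ≤ c * (W (xs' i) (ys' i) * W (xs i) (ys i)) := key _ _ _ _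
          _ = c * (W (xs i) (ys i) * W (xs' i) (ys' i)) := by ring
    calc (c ^ n)⁻¹ * (P xs ys' * P xs' ys)
        ≤ (c ^ n)⁻¹ * (c ^ n * (P xs ys * P xs' ys')) :=
          mul_le_mul_of_nonneg_left hprod (inv_nonneg.mpr hcn.le)
      _ = P xs ys * P xs' ys' := by field_simp
  -- main computation
  rw [ge_iff_le, hexp]
  have e12 : endToEnd W n E D m₁ m₂
      = ∑ xs : Fin n → X, ∑ ys : Fin n → Y, E m₁ xs * P xs ys * D ys m₂ := rfl
  have e21 : endToEnd W n E D m₂ m₁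
      = ∑ xs : Fin n → X, ∑ ys : Fin n → Y, E m₂ xs * P xs ys * D ys m₁ := rfl
  have e11 : endToEnd W n E D m₁ m₁
      = ∑ xs : Fin n → X, ∑ ys : Fin n → Y, E m₁ xs * P xs ys * D ys m₁ := rfl
  have e22 : endToEnd W n E D m₂ m₂
      = ∑ xs : Fin n → X, ∑ ys : Fin n → Y, E m₂ xs * P xs ys * D ys m₂ := rfl
  rw [e12, e21, e11, e22,
    rearr_sum (fun xs ys => E m₁ xs * P xs ys * D ys m₁)
      (fun xs ys => E m₂ xs * P xs ys * D ys m₂),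
    rearr_sum (fun xs ys => E m₁ xs * P xs ys * D ys m₂)
      (fun xs ys => E m₂ xs * P xs ys * D ys m₁)]
  calc (c ^ n)⁻¹ * ∑ xs : Fin n → X, ∑ xs' : Fin n → X, ∑ ys : Fin n → Y, ∑ ys' : Fin n → Y,
        (E m₁ xs * P xs ys * D ys m₁) * (E m₂ xs' * P xs' ys' * D ys' m₂)
      = ∑ xs : Fin n → X, ∑ xs' : Fin n → X, ∑ ys : Fin n → Y, ∑ ys' : Fin n → Y,
        (c ^ n)⁻¹ * ((E m₁ xs * P xs ys' * D ys' m₁) * (E m₂ xs' * P xs' ys * D ys m₂)) := by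
        simp only [Finset.mul_sum]
        refine Finset.sum_congr rfl fun xs _ => Finset.sum_congr rfl fun xs' _ => ?_
        exact Finset.sum_comm
    _ ≤ ∑ xs : Fin n → X, ∑ xs' : Fin n → X, ∑ ys : Fin n → Y, ∑ ys' : Fin n → Y,
        (E m₁ xs * P xs ys * D ys m₂) * (E m₂ xs' * P xs' ys' * D ys' m₁) := by
        refine Finset.sum_le_sum fun xs _ => Finset.sum_le_sum fun xs' _ =>
          Finset.sum_le_sum fun ys _ => Finset.sum_le_sum fun ys' _ => ?_
        have hK : 0 ≤ E m₁ xs * E m₂ xs' * D ys m₂ * D ys' m₁ :=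
          mul_nonneg (mul_nonneg (mul_nonneg ((hE m₁).1 xs) ((hE m₂).1 xs'))
            ((hD ys).1 m₂)) ((hD ys').1 m₁)
        calc (c ^ n)⁻¹ * ((E m₁ xs * P xs ys' * D ys' m₁) * (E m₂ xs' * P xs' ys * D ys m₂))
            = (E m₁ xs * E m₂ xs' * D ys m₂ * D ys' m₁) * ((c ^ n)⁻¹ * (P xs ys' * P xs' ys)) := by
              ring
          _ ≤ (E m₁ xs * E m₂ xs' * D ys m₂ * D ys' m₁) * (P xs ys * P xs' ys') :=
              mul_le_mul_of_nonneg_left (hQ xs xs' ys ys') hK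
          _ = (E m₁ xs * P xs ys * D ys m₂) * (E m₂ xs' * P xs' ys' * D ys' m₁) := by ring
end
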